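/- arXiv:2511.15152 — 3 statements merged into one kernel-verified Lean document; each statement's English description precedes it below -/
import Mathlib

section
/- Let k₁, k₂ ∈ ℝ² be linearly independent vectors and let S ⊂ ℝ² be a compact set such that m₁ k₁ + m₂ k₂ + w ≠ 0 for every m = (m₁, m₂) ∈ ℤ² and every w ∈ S. Then there exists a constant C > 0 such that |m₁ k₁ + m₂ k₂ + w| ≥ C (1 + |m|) for all m ∈ ℤ² and all w ∈ S. -/
lemma aux8 (k₁ k₂ : EuclideanSpace ℝ (Fin 2)) (h : LinearIndependent ℝ ![k₁, k₂]) :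
    ∃ c > (0:ℝ), ∀ x y : ℝ, c * Real.sqrt (x^2+y^2) ≤ ‖x • k₁ + y • k₂‖ := by
  set L : EuclideanSpace ℝ (Fin 2) →ₗ[ℝ] EuclideanSpace ℝ (Fin 2) :=
    { toFun := fun v => v 0 • k₁ + v 1 • k₂
      map_add' := fun u v => by
        simp [PiLp.add_apply, add_smul]; module
      map_smul' := fun c v => by
        simp [PiLp.smul_apply, smul_smul, smul_add] } with hLdef
  have hinj : Function.Injective L := by
    rw [injective_iff_map_eq_zero]
    intro v hv
    rw [Fintype.linearIndependent_iff] at h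
    have h0 := h (fun i => v i) (by simpa [Fin.sum_univ_two] using (show v 0 • k₁ + v 1 • k₂ = 0 from hv))
    ext i
    fin_cases i
    · exact h0 0
    · exact h0 1
  obtain ⟨K, hKpos, hK⟩ := L.injective_iff_antilipschitz.mp hinj
  refine ⟨(K:ℝ)⁻¹, by positivity, fun x y => ?_⟩
  have hv : ∃ v : EuclideanSpace ℝ (Fin 2), v = WithLp.toLp 2 ![x, y] := ⟨WithLp.toLp 2 ![x, y], rfl⟩
  obtain ⟨v, hveq⟩ := hv
  have h1 : ‖v‖ ≤ (K:ℝ) * ‖L v‖ := by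
    have := hK.le_mul_dist v 0
    simpa [dist_eq_norm] using this
  have h2 : L v = x • k₁ + y • k₂ := by
    rw [hveq]; rfl
  have h3 : ‖v‖ = Real.sqrt (x^2 + y^2) := by
    have := EuclideanSpace.norm_eq (𝕜 := ℝ) v
    simpa [hveq, Fin.sum_univ_two, Real.norm_eq_abs, sq_abs] using this
  rw [h2, h3] at h1
  rw [inv_mul_le_iff₀ (show (0:ℝ) < K from by exact_mod_cast hKpos)]
  exact h1

lemma sqrt_ge_abs1 (a b : ℝ) : |a| ≤ Real.sqrt (a^2+b^2) := by
  rw [← Real.sqrt_sq_eq_abs]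
  exact Real.sqrt_le_sqrt (by nlinarith [sq_nonneg b])

lemma sqrt_ge_abs2 (a b : ℝ) : |b| ≤ Real.sqrt (a^2+b^2) := by
  rw [← Real.sqrt_sq_eq_abs]
  exact Real.sqrt_le_sqrt (by nlinarith [sq_nonneg a])

lemma sqrt_le_abs_add (a b : ℝ) : Real.sqrt (a^2+b^2) ≤ |a| + |b| := by
  rw [← Real.sqrt_sq (by positivity : (0:ℝ) ≤ |a| + |b|)]
  exact Real.sqrt_le_sqrt (by nlinarith [abs_nonneg a, abs_nonneg b, sq_abs a, sq_abs b])

theorem stmt8 (k₁ k₂ : EuclideanSpace ℝ (Fin 2))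
    (h : LinearIndependent ℝ ![k₁, k₂])
    (S : Set (EuclideanSpace ℝ (Fin 2))) (hS : IsCompact S)
    (hne : ∀ m : ℤ × ℤ, ∀ w ∈ S, (m.1 : ℝ) • k₁ + (m.2 : ℝ) • k₂ + w ≠ 0) :
    ∃ C > (0 : ℝ), ∀ m : ℤ × ℤ, ∀ w ∈ S,
      C * (1 + Real.sqrt ((m.1 : ℝ)^2 + (m.2 : ℝ)^2)) ≤
        ‖(m.1 : ℝ) • k₁ + (m.2 : ℝ) • k₂ + w‖ := by
  rcases S.eq_empty_or_nonempty with hSe | hSne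
  · exact ⟨1, one_pos, by simp [hSe]⟩
  obtain ⟨c, hc, hcb⟩ := aux8 k₁ k₂ h
  obtain ⟨R0, hR0⟩ := hS.isBounded.exists_norm_le
  set R : ℝ := max R0 0 with hRdef
  have hR : ∀ w ∈ S, ‖w‖ ≤ R := fun w hw => (hR0 w hw).trans (le_max_left _ _)
  have hRnn : (0:ℝ) ≤ R := le_max_right _ _
  set N : ℕ := ⌈2*R/c⌉₊ + 1 with hNdef
  have hN : 2*R/c + 1 ≤ (N:ℝ) := by
    have := Nat.le_ceil (2*R/c)
    push_cast [hNdef]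
    linarith
  set T : Finset (ℤ×ℤ) := Finset.Icc (-(N:ℤ)) N ×ˢ Finset.Icc (-(N:ℤ)) N with hTdef
  set F : ℤ × ℤ → ℝ := fun m =>
    sInf ((fun w => ‖(m.1 : ℝ) • k₁ + (m.2 : ℝ) • k₂ + w‖) '' S) with hFdef
  have hFpos : ∀ m : ℤ × ℤ, 0 < F m := by
    intro m
    obtain ⟨w₀, hw₀S, hmin⟩ := hS.exists_isMinOn hSne
      (((continuous_const.add continuous_id).norm).continuousOn :
        ContinuousOn (fun w => ‖(m.1 : ℝ) • k₁ + (m.2 : ℝ) • k₂ + w‖) S)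
    have h1 : (0:ℝ) < ‖(m.1 : ℝ) • k₁ + (m.2 : ℝ) • k₂ + w₀‖ :=
      norm_pos_iff.mpr (hne m w₀ hw₀S)
    refine lt_of_lt_of_le h1 (le_csInf (hSne.image _) ?_)
    rintro b ⟨w, hw, rfl⟩
    exact hmin hw
  have hFle : ∀ m : ℤ × ℤ, ∀ w ∈ S, F m ≤ ‖(m.1 : ℝ) • k₁ + (m.2 : ℝ) • k₂ + w‖ := by
    intro m w hw
    exact csInf_le ⟨0, by rintro b ⟨w', _, rfl⟩; exact norm_nonneg _⟩ ⟨w, hw, rfl⟩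
  have hTne : T.Nonempty := ⟨(0,0), by simp [hTdef]⟩
  set ε : ℝ := T.inf' hTne F with hεdef
  have hε : 0 < ε := by
    rw [hεdef, Finset.lt_inf'_iff]
    exact fun m _ => hFpos m
  refine ⟨min (c/2) (ε / (1 + 2*N)), lt_min (by positivity) (by positivity), ?_⟩
  intro m w hw
  set s : ℝ := Real.sqrt ((m.1 : ℝ)^2 + (m.2 : ℝ)^2) with hsdef
  have hs0 : 0 ≤ s := Real.sqrt_nonneg _
  by_cases hm : m ∈ T
  · -- small m
    rw [hTdef, Finset.mem_product, Finset.mem_Icc, Finset.mem_Icc] at hm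
    have h1 : |(m.1:ℝ)| ≤ (N:ℝ) := by
      have : |m.1| ≤ (N:ℤ) := abs_le.mpr hm.1
      exact_mod_cast this
    have h2 : |(m.2:ℝ)| ≤ (N:ℝ) := by
      have : |m.2| ≤ (N:ℤ) := abs_le.mpr hm.2
      exact_mod_cast this
    have hsle : s ≤ 2*N := (sqrt_le_abs_add _ _).trans (by linarith)
    have hεle : ε ≤ ‖(m.1 : ℝ) • k₁ + (m.2 : ℝ) • k₂ + w‖ :=
      (Finset.inf'_le F (by rw [hTdef]; exact Finset.mem_product.mpr ⟨Finset.mem_Icc.mpr hm.1, Finset.mem_Icc.mpr hm.2⟩)).trans (hFle m w hw)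
    have hC : min (c/2) (ε / (1 + 2*N)) ≤ ε / (1 + 2*N) := min_le_right _ _
    have hpos : (0:ℝ) < 1 + 2*N := by positivity
    calc min (c/2) (ε / (1 + 2*N)) * (1 + s)
        ≤ (ε / (1 + 2*N)) * (1 + 2*N) := by
          apply mul_le_mul hC (by linarith) (by linarith) (by positivity)
      _ = ε := by field_simp
      _ ≤ _ := hεle
  · -- large m
    rw [hTdef, Finset.mem_product, Finset.mem_Icc, Finset.mem_Icc] at hm
    have hcase : (N:ℤ) ≤ |m.1| ∨ (N:ℤ) ≤ |m.2| := by
      rcases abs_cases m.1 with ⟨e1,_⟩|⟨e1,_⟩ <;> rcases abs_cases m.2 with ⟨e2,_⟩|⟨e2,_⟩ <;> omega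
    have hsN : (N:ℝ) ≤ s := by
      rcases hcase with h1 | h1
      · have h4 : (N:ℝ) ≤ |(m.1:ℝ)| := by exact_mod_cast h1
        exact h4.trans (sqrt_ge_abs1 _ _)
      · have h4 : (N:ℝ) ≤ |(m.2:ℝ)| := by exact_mod_cast h1
        exact h4.trans (sqrt_ge_abs2 _ _)
    have hs2 : 2*R/c + 1 ≤ s := hN.trans hsN
    have hlow : c * s ≤ ‖(m.1 : ℝ) • k₁ + (m.2 : ℝ) • k₂‖ := hcb _ _
    have htri : ‖(m.1 : ℝ) • k₁ + (m.2 : ℝ) • k₂‖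
        ≤ ‖(m.1 : ℝ) • k₁ + (m.2 : ℝ) • k₂ + w‖ + ‖w‖ := by
      have := norm_sub_le ((m.1 : ℝ) • k₁ + (m.2 : ℝ) • k₂ + w) w
      simpa using this
    have hwR := hR w hw
    have hC : min (c/2) (ε / (1 + 2*N)) ≤ c/2 := min_le_left _ _
    have key : c * s - R ≥ (c/2) * (1 + s) := by
      have h5 : 2*R/c * c = 2*R := by field_simp
      nlinarith
    have : min (c/2) (ε / (1 + 2*N)) * (1 + s) ≤ (c/2) * (1+s) :=
      mul_le_mul_of_nonneg_right hC (by linarith)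
    linarith
end

section
/- Let B₀ > 0, k ∈ ℝ and n ∈ ℕ. Define φ : ℝ → ℝ by φ(x) = H_n(ξ) e^{-ξ²/2} with ξ = √B₀ (x - k/B₀). Then φ is twice differentiable and satisfies -φ''(x) + (k - B₀ x)² φ(x) = (2n+1) B₀ φ(x) for every x ∈ ℝ. -/
/-- The physicists' Hermite polynomials, as real functions:
`H₀ = 1`, `H₁ x = 2x`, and `H_{n+1} x = 2x · H_n x - 2n · H_{n-1} x`. -/
noncomputable def physHermite : ℕ → ℝ → ℝ
  | 0 => fun _ => 1
  | 1 => fun x => 2 * x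
  | n + 2 => fun x => 2 * x * physHermite (n + 1) x - 2 * (n + 1) * physHermite n x

theorem hA : ∀ (n : ℕ) (x : ℝ),
    HasDerivAt (physHermite (n + 1)) (2 * (n + 1) * physHermite n x) x
  | 0, x => by
    simpa [physHermite] using ((hasDerivAt_id x).const_mul (2:ℝ))
  | 1, x => by
    have heq : physHermite 2 = fun y : ℝ => 2 * y * (2 * y) - 2 * 1 * 1 := by
      funext y; simp only [physHermite]; norm_num
    rw [show (1:ℕ) + 1 = 2 from rfl, heq]
    have h := (((hasDerivAt_id x).const_mul (2:ℝ)).mul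
      ((hasDerivAt_id x).const_mul (2:ℝ))).sub_const (2*1*1 : ℝ)
    refine h.congr_deriv ?_
    simp only [physHermite, id]
    (try push_cast); (try ring)
  | (n+2), x => by
    have h1 := hA n x
    have h2 := hA (n+1) x
    have heq : physHermite (n+3) = fun y : ℝ =>
        2 * y * physHermite (n+2) y - 2 * ((n:ℝ)+2) * physHermite (n+1) y := by
      funext y
      show physHermite ((n+1)+2) y = _
      simp only [physHermite]
      (try push_cast); (try ring)
    rw [show n+2+1 = n+3 from rfl, heq]
    have h := (((hasDerivAt_id x).const_mul (2:ℝ)).mul h2).sub (h1.const_mul (2*((n:ℝ)+2)))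
    refine h.congr_deriv ?_
    rw [show physHermite (n+2) x = 2 * x * physHermite (n+1) x - 2 * ((n:ℝ)+1) * physHermite n x
      by simp only [physHermite]; (try push_cast); (try ring)]
    simp only [id]
    (try push_cast); (try ring)

lemma hd (n : ℕ) (x : ℝ) :
    HasDerivAt (physHermite n) (2 * ((n:ℕ):ℝ) * physHermite (n-1) x) x := by
  cases n with
  | zero => simpa [physHermite] using (hasDerivAt_const x (1:ℝ))
  | succ m => simpa using hA m x

lemma ode (n : ℕ) (x : ℝ) :
    2*(n:ℝ)*(2*((n-1 : ℕ):ℝ)*physHermite (n-2) x)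
      - 2*x*(2*(n:ℝ)*physHermite (n-1) x) + 2*(n:ℝ)*physHermite n x = 0 := by
  match n with
  | 0 => simp
  | 1 => norm_num [physHermite]; ring
  | (m+2) =>
    have hrec : physHermite (m+2) x
        = 2 * x * physHermite (m+1) x - 2*((m:ℝ)+1) * physHermite m x := by
      simp only [physHermite]; (try push_cast); (try ring)
    simp only [show m+2-1 = m+1 from rfl, show m+2-2 = m from rfl, hrec]
    push_cast
    ring

lemma psi1 (n : ℕ) (x : ℝ) :
    HasDerivAt (fun y => physHermite n y * Real.exp (-(y^2)/2))
      ((2*((n:ℕ):ℝ)*physHermite (n-1) x - x * physHermite n x) * Real.exp (-(x^2)/2)) x := by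
  have he : HasDerivAt (fun y : ℝ => Real.exp (-(y^2)/2)) (Real.exp (-(x^2)/2) * (-x)) x := by
    have h0 : HasDerivAt (fun y : ℝ => -(y^2)/2) (-x) x := by
      have := ((hasDerivAt_pow 2 x).neg).div_const 2
      refine this.congr_deriv ?_; (try push_cast); (try ring)
    exact h0.exp
  have := (hd n x).mul he
  refine this.congr_deriv ?_
  ring

lemma psi2 (n : ℕ) (x : ℝ) :
    HasDerivAt (fun y => (2*((n:ℕ):ℝ)*physHermite (n-1) y - y * physHermite n y) * Real.exp (-(y^2)/2))
      ((x^2 - (2*(n:ℝ)+1)) * (physHermite n x * Real.exp (-(x^2)/2))) x := by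
  have he : HasDerivAt (fun y : ℝ => Real.exp (-(y^2)/2)) (Real.exp (-(x^2)/2) * (-x)) x := by
    have h0 : HasDerivAt (fun y : ℝ => -(y^2)/2) (-x) x := by
      have := ((hasDerivAt_pow 2 x).neg).div_const 2
      refine this.congr_deriv ?_; (try push_cast); (try ring)
    exact h0.exp
  have hP : HasDerivAt (fun y : ℝ => 2*((n:ℕ):ℝ)*physHermite (n-1) y - y * physHermite n y)
      (2*((n:ℕ):ℝ)*(2*((n-1:ℕ):ℝ)*physHermite (n-1-1) x)
        - (1 * physHermite n x + x * (2*((n:ℕ):ℝ)*physHermite (n-1) x))) x :=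
    ((hd (n-1) x).const_mul (2*((n:ℕ):ℝ))).sub ((hasDerivAt_id x).mul (hd n x))
  have := hP.mul he
  refine this.congr_deriv ?_
  have h := ode n x
  rw [show n-1-1 = n-2 from rfl] at *
  linear_combination (Real.exp (-(x^2)/2)) * h

theorem stmt9 (B₀ k : ℝ) (hB : 0 < B₀) (n : ℕ) (φ : ℝ → ℝ)
    (hφ : φ = fun x => physHermite n (Real.sqrt B₀ * (x - k / B₀)) *
      Real.exp (-(Real.sqrt B₀ * (x - k / B₀))^2 / 2)) :
    Differentiable ℝ φ ∧ Differentiable ℝ (deriv φ) ∧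
    ∀ x : ℝ, -(deriv (deriv φ) x) + (k - B₀ * x)^2 * φ x = (2 * n + 1) * B₀ * φ x := by
  set c := Real.sqrt B₀ with hc
  have hc2 : c^2 = B₀ := Real.sq_sqrt hB.le
  set g : ℝ → ℝ := fun x => c * (x - k / B₀) with hg
  have hgd : ∀ x, HasDerivAt g c x := by
    intro x
    simpa using ((hasDerivAt_id x).sub_const (k/B₀)).const_mul c
  have hφ1 : ∀ x, HasDerivAt φ
      ((2*((n:ℕ):ℝ)*physHermite (n-1) (g x) - (g x) * physHermite n (g x))
        * Real.exp (-((g x)^2)/2) * c) x := by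
    intro x
    rw [hφ]
    exact (psi1 n (g x)).comp x (hgd x)
  have hd1 : deriv φ = fun x =>
      (2*((n:ℕ):ℝ)*physHermite (n-1) (g x) - (g x) * physHermite n (g x))
        * Real.exp (-((g x)^2)/2) * c := by
    funext x; exact (hφ1 x).deriv
  have hφ2 : ∀ x, HasDerivAt (deriv φ)
      (((g x)^2 - (2*(n:ℝ)+1)) * (physHermite n (g x) * Real.exp (-((g x)^2)/2)) * c * c) x := by
    intro x
    rw [hd1]
    exact ((psi2 n (g x)).comp x (hgd x)).mul_const c
  refine ⟨fun x => (hφ1 x).differentiableAt, fun x => (hφ2 x).differentiableAt, ?_⟩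
  intro x
  rw [(hφ2 x).deriv]
  have hφx : φ x = physHermite n (g x) * Real.exp (-((g x)^2)/2) := by rw [hφ]
  rw [hφx]
  have hcc : c * c = B₀ := by rw [← sq]; exact hc2
  have hgx2 : (g x)^2 * (c*c) = (k - B₀*x)^2 := by
    have h1 : (g x)^2 * (c*c) = (B₀ * (x - k/B₀))^2 := by
      show (c * (x - k/B₀))^2 * (c*c) = _
      linear_combination ((x - k/B₀)^2 * (c^2 + B₀)) * hc2
    have h2 : B₀ * (x - k/B₀) = B₀*x - k := by field_simp
    rw [h1, h2]; ring
  linear_combination (-(physHermite n (g x) * Real.exp (-((g x)^2)/2))) * hgx2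
    + ((2*(n:ℝ)+1) * (physHermite n (g x) * Real.exp (-((g x)^2)/2))) * hcc
end

section
/- Let B₀ > 0, v > 0, k ∈ ℝ, n ≥ 1 an integer, and s ∈ {+1, -1}. Define ψ_{m,k}(x) = (B₀^{1/4} / (π^{1/4} √(2^m m!))) H_m(ξ) e^{-ξ²/2} with ξ = √B₀ (x - k/B₀). Then the spinor (u₁, u₂) = (i ψ_{n,k}, s ψ_{n-1,k}) is an eigenfunction of the fibered Dirac operator 𝒟(k) with eigenvalue s·v·√(2 n B₀): that is, 𝒟(k)(u₁, u₂)(x) = s v √(2 n B₀) (u₁(x), u₂(x)) for every x ∈ ℝ. -/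
open Complex

/-- The normalized Landau-level eigenmode `ψ_{m,k}`. -/
noncomputable def landauMode (B₀ k : ℝ) (m : ℕ) (x : ℝ) : ℝ :=
  B₀ ^ ((1:ℝ)/4) / (Real.pi ^ ((1:ℝ)/4) * Real.sqrt (2^m * (m.factorial : ℝ))) *
    (physHermite m (Real.sqrt B₀ * (x - k / B₀)) *
      Real.exp (-(Real.sqrt B₀ * (x - k / B₀))^2 / 2))

lemma physHermite_recur (m : ℕ) (x : ℝ) :
    physHermite (m+1) x = 2*x*physHermite m x - 2*m*physHermite (m-1) x := by
  cases m with
  | zero => simp [physHermite]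
  | succ p =>
      show 2 * x * physHermite (p+1) x - 2 * ((p:ℝ)+1) * physHermite p x = _
      push_cast
      simp only [Nat.add_sub_cancel]

lemma hasDerivAt_physHermite : ∀ (m : ℕ) (x : ℝ),
    HasDerivAt (physHermite m) (2 * m * physHermite (m-1) x) x
  | 0, x => by simpa [physHermite] using (hasDerivAt_const x (1:ℝ))
  | 1, x => by
      have : HasDerivAt (fun y : ℝ => 2 * y) 2 x := by
        simpa using (hasDerivAt_id x).const_mul (2:ℝ)
      simpa [physHermite] using this
  | (m+2), x => by
      have h1 := hasDerivAt_physHermite (m+1) x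
      have h0 := hasDerivAt_physHermite m x
      have hx : HasDerivAt (fun y : ℝ => 2*y) 2 x := by
        simpa using (hasDerivAt_id x).const_mul (2:ℝ)
      have h := (hx.mul h1).sub (h0.const_mul (2*((m:ℝ)+1)))
      have hfun : (fun y : ℝ => 2*y*physHermite (m+1) y - 2*((m:ℝ)+1)*physHermite m y)
          = physHermite (m+2) := by
        funext y; simp [physHermite]
      change HasDerivAt (fun y : ℝ => 2*y*physHermite (m+1) y - 2*((m:ℝ)+1)*physHermite m y) _ x at h
      rw [hfun] at h
      convert h using 1
      have hrec := physHermite_recur m x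
      simp only [Nat.add_sub_cancel] at hrec ⊢
      push_cast at hrec ⊢
      linear_combination (2*((m:ℝ)+1)) * hrec

lemma hasDerivAt_landauMode (B₀ k : ℝ) (m : ℕ) (x : ℝ) :
    HasDerivAt (landauMode B₀ k m)
      (B₀ ^ ((1:ℝ)/4) / (Real.pi ^ ((1:ℝ)/4) * Real.sqrt (2^m * (m.factorial : ℝ))) *
        ((2*m*physHermite (m-1) (Real.sqrt B₀ * (x - k / B₀))
          - (Real.sqrt B₀ * (x - k / B₀)) * physHermite m (Real.sqrt B₀ * (x - k / B₀)))
          * Real.exp (-(Real.sqrt B₀ * (x - k / B₀))^2 / 2) * Real.sqrt B₀)) x := by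
  set ξ := Real.sqrt B₀ * (x - k / B₀) with hξdef
  have hξ : HasDerivAt (fun y : ℝ => Real.sqrt B₀ * (y - k / B₀)) (Real.sqrt B₀) x := by
    simpa using ((hasDerivAt_id x).sub_const (k/B₀)).const_mul (Real.sqrt B₀)
  have hH : HasDerivAt (fun y => physHermite m (Real.sqrt B₀ * (y - k/B₀)))
      ((2*m*physHermite (m-1) ξ) * Real.sqrt B₀) x :=
    (hasDerivAt_physHermite m ξ).comp x hξ
  have hinner : HasDerivAt (fun y => -(Real.sqrt B₀ * (y - k/B₀))^2/2)
      (-ξ * Real.sqrt B₀) x := by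
    have := ((hξ.pow 2).neg.div_const 2)
    refine this.congr_deriv ?_
    simp
    ring
  have hE : HasDerivAt (fun y => Real.exp (-(Real.sqrt B₀ * (y - k/B₀))^2/2))
      (Real.exp (-ξ^2/2) * (-ξ * Real.sqrt B₀)) x := hinner.exp
  have h := (hH.mul hE).const_mul
    (B₀ ^ ((1:ℝ)/4) / (Real.pi ^ ((1:ℝ)/4) * Real.sqrt (2^m * (m.factorial : ℝ))))
  have hfun : (fun y => physHermite m (Real.sqrt B₀ * (y - k/B₀)) *
      Real.exp (-(Real.sqrt B₀ * (y - k/B₀))^2/2)) =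
      fun y => physHermite m (Real.sqrt B₀ * (y - k/B₀)) *
      Real.exp (-(Real.sqrt B₀ * (y - k/B₀))^2/2) := rfl
  unfold landauMode
  refine h.congr_deriv ?_
  ring

lemma sqrt_ratio (m : ℕ) :
    Real.sqrt (2^(m+1) * ((m+1).factorial : ℝ))
      = Real.sqrt (2*((m:ℝ)+1)) * Real.sqrt (2^m * (m.factorial : ℝ)) := by
  rw [← Real.sqrt_mul (by positivity)]
  congr 1
  push_cast [Nat.factorial_succ]
  ring

lemma keyA (B₀ k : ℝ) (hB : 0 < B₀) (m : ℕ) (x : ℝ) :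
    deriv (landauMode B₀ k m) x + (k - B₀*x) * landauMode B₀ k m x
      = - (Real.sqrt (2*((m:ℝ)+1)*B₀) * landauMode B₀ k (m+1) x) := by
  rw [(hasDerivAt_landauMode B₀ k m x).deriv]
  unfold landauMode
  set ξ := Real.sqrt B₀ * (x - k / B₀) with hξdef
  set A := B₀ ^ ((1:ℝ)/4) with hA
  set P := Real.pi ^ ((1:ℝ)/4) with hP
  set e := Real.exp (-ξ^2/2) with he
  have hB' : B₀ ≠ 0 := ne_of_gt hB
  have hkx : k - B₀*x = -(Real.sqrt B₀ * ξ) := by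
    rw [hξdef]
    rw [← mul_assoc, Real.mul_self_sqrt hB.le]
    field_simp
    ring
  have hrec := physHermite_recur m ξ
  have h1 : Real.sqrt (2*((m:ℝ)+1)*B₀) * (A / (P * Real.sqrt (2^(m+1)*((m+1).factorial : ℝ))))
      = Real.sqrt B₀ * (A / (P * Real.sqrt (2^m * (m.factorial : ℝ)))) := by
    rw [Real.sqrt_mul (by positivity : (0:ℝ) ≤ 2*((m:ℝ)+1)), sqrt_ratio]
    have hP0 : P ≠ 0 := by rw [hP]; positivity
    have hs1 : Real.sqrt (2*((m:ℝ)+1)) ≠ 0 := by positivity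
    have hs2 : Real.sqrt (2^m * (m.factorial : ℝ)) ≠ 0 := by positivity
    field_simp
  push_cast
  linear_combination
    (A / (P * Real.sqrt (2^m * (m.factorial : ℝ))) * physHermite m ξ * e) * hkx
    + (physHermite (m+1) ξ * e) * h1
    + (Real.sqrt B₀ * (A / (P * Real.sqrt (2^m * (m.factorial : ℝ)))) * e) * hrec

lemma keyB (B₀ k : ℝ) (hB : 0 < B₀) (m : ℕ) (x : ℝ) :
    deriv (landauMode B₀ k (m+1)) x - (k - B₀*x) * landauMode B₀ k (m+1) x
      = Real.sqrt (2*((m:ℝ)+1)*B₀) * landauMode B₀ k m x := by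
  rw [(hasDerivAt_landauMode B₀ k (m+1) x).deriv]
  unfold landauMode
  set ξ := Real.sqrt B₀ * (x - k / B₀) with hξdef
  set A := B₀ ^ ((1:ℝ)/4) with hA
  set P := Real.pi ^ ((1:ℝ)/4) with hP
  set e := Real.exp (-ξ^2/2) with he
  have hB' : B₀ ≠ 0 := ne_of_gt hB
  have hkx : k - B₀*x = -(Real.sqrt B₀ * ξ) := by
    rw [hξdef]
    rw [← mul_assoc, Real.mul_self_sqrt hB.le]
    field_simp
    ring
  have h2 : Real.sqrt (2*((m:ℝ)+1)*B₀) * (A / (P * Real.sqrt (2^m * (m.factorial : ℝ))))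
      = Real.sqrt B₀ * (2*((m:ℝ)+1)) * (A / (P * Real.sqrt (2^(m+1)*((m+1).factorial : ℝ)))) := by
    rw [Real.sqrt_mul (by positivity : (0:ℝ) ≤ 2*((m:ℝ)+1)), sqrt_ratio]
    have hP0 : P ≠ 0 := by rw [hP]; positivity
    set a := Real.sqrt (2*((m:ℝ)+1)) with ha
    set b := Real.sqrt (2^m * (m.factorial : ℝ)) with hb
    have hs1 : a ≠ 0 := by rw [ha]; positivity
    have hs2 : b ≠ 0 := by rw [hb]; positivity
    have hq : a * a = 2*((m:ℝ)+1) := Real.mul_self_sqrt (by positivity)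
    field_simp
    linear_combination A * hq
  simp only [Nat.add_sub_cancel]
  push_cast
  linear_combination
    (-(A / (P * Real.sqrt (2^(m+1)*((m+1).factorial : ℝ))) * physHermite (m+1) ξ * e)) * hkx
    + (-(physHermite m ξ * e)) * h2

theorem stmt12 (B₀ v k : ℝ) (hB : 0 < B₀) (hv : 0 < v) (n : ℕ) (hn : 1 ≤ n)
    (s : ℝ) (hs : s = 1 ∨ s = -1)
    (u₁ u₂ : ℝ → ℂ)
    (hu₁ : u₁ = fun x => I * Complex.ofReal (landauMode B₀ k n x))
    (hu₂ : u₂ = fun x => (s : ℂ) * Complex.ofReal (landauMode B₀ k (n - 1) x)) :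
    ∀ x : ℝ,
      (v : ℂ) * (-I * deriv u₂ x - I * ((k : ℂ) - (B₀ : ℂ) * (x : ℂ)) * u₂ x) =
        (s : ℂ) * (v : ℂ) * Complex.ofReal (Real.sqrt (2 * n * B₀)) * u₁ x ∧
      (v : ℂ) * (-I * deriv u₁ x + I * ((k : ℂ) - (B₀ : ℂ) * (x : ℂ)) * u₁ x) =
        (s : ℂ) * (v : ℂ) * Complex.ofReal (Real.sqrt (2 * n * B₀)) * u₂ x := by
  intro x
  obtain ⟨m, rfl⟩ : ∃ m, n = m + 1 := ⟨n - 1, (Nat.succ_pred_eq_of_pos hn).symm⟩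
  simp only [Nat.add_sub_cancel] at hu₂
  have hd0 := (hasDerivAt_landauMode B₀ k m x).differentiableAt.hasDerivAt
  have hd1 := (hasDerivAt_landauMode B₀ k (m+1) x).differentiableAt.hasDerivAt
  have hu2' : deriv u₂ x = (s:ℂ) * ((deriv (landauMode B₀ k m) x : ℝ) : ℂ) := by
    rw [hu₂]; exact (hd0.ofReal_comp.const_mul (s:ℂ)).deriv
  have hu1' : deriv u₁ x = I * ((deriv (landauMode B₀ k (m+1)) x : ℝ) : ℂ) := by
    rw [hu₁]; exact (hd1.ofReal_comp.const_mul I).deriv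
  have hA : ((deriv (landauMode B₀ k m) x : ℝ) : ℂ)
      + ((k:ℂ) - (B₀:ℂ)*(x:ℂ)) * ((landauMode B₀ k m x : ℝ) : ℂ)
      = -(((Real.sqrt (2*((m:ℝ)+1)*B₀) : ℝ) : ℂ) * ((landauMode B₀ k (m+1) x : ℝ) : ℂ)) := by
    have := congrArg (Complex.ofReal) (keyA B₀ k hB m x)
    push_cast at this ⊢
    linear_combination this
  have hBc : ((deriv (landauMode B₀ k (m+1)) x : ℝ) : ℂ)
      - ((k:ℂ) - (B₀:ℂ)*(x:ℂ)) * ((landauMode B₀ k (m+1) x : ℝ) : ℂ)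
      = ((Real.sqrt (2*((m:ℝ)+1)*B₀) : ℝ) : ℂ) * ((landauMode B₀ k m x : ℝ) : ℂ) := by
    have := congrArg (Complex.ofReal) (keyB B₀ k hB m x)
    push_cast at this ⊢
    linear_combination this
  have hs2 : (s:ℂ)^2 = 1 := by
    rcases hs with h | h <;> rw [h] <;> norm_num
  have hI2 : (I:ℂ)^2 = -1 := Complex.I_sq
  have hSn : (Real.sqrt (2 * ((m:ℕ)+1 : ℕ) * B₀) : ℂ)
      = (Real.sqrt (2*((m:ℝ)+1)*B₀) : ℂ) := by push_cast; ring_nf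
  constructor
  · rw [hu2', hu₁, hu₂]
    simp only
    push_cast
    linear_combination (-I * (v:ℂ) * (s:ℂ)) * hA
  · rw [hu1', hu₁, hu₂]
    simp only
    push_cast
    linear_combination
      ((-(v:ℂ)) * ((deriv (landauMode B₀ k (m+1)) x : ℝ) : ℂ)
        + (v:ℂ) * ((k:ℂ) - (B₀:ℂ)*(x:ℂ)) * ((landauMode B₀ k (m+1) x : ℝ) : ℂ)) * hI2
      + (-((v:ℂ) * ((Real.sqrt (2*((m:ℝ)+1)*B₀) : ℝ) : ℂ)
          * ((landauMode B₀ k m x : ℝ) : ℂ))) * hs2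
      + (v:ℂ) * hBc
end
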